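/- arXiv:1702.01673 — 5 statements merged into one kernel-verified Lean document; each statement's English description precedes it below -/
import Mathlib

section
/- Let μ be a compactly supported Borel probability measure on ℝ and let I ⊆ ℝ be an interval (a convex subset of ℝ) with I ∩ supp(μ) = ∅. Then the real-valued function x ↦ ∫_ℝ 1/(x−t) dμ(t) is strictly decreasing on I. -/
open MeasureTheory Complex Filter Topology

/-- The topological support of a measure: the set of points all of whose neighbourhoods
have nonzero measure.  This is the smallest closed set of full measure (for Borel measures
on second-countable spaces). -/
def measureSupport {α : Type*} [TopologicalSpace α] [MeasurableSpace α] (μ : Measure α) : Set α :=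
  {x | ∀ U ∈ nhds x, μ U ≠ 0}

lemma isClosed_measureSupport (μ : Measure ℝ) : IsClosed (measureSupport μ) := by
  rw [← isOpen_compl_iff, isOpen_iff_mem_nhds]
  intro x hx
  simp only [Set.mem_compl_iff, measureSupport, Set.mem_setOf_eq, not_forall] at hx
  obtain ⟨U, hU, hU0⟩ := hx
  push_neg at hU0
  obtain ⟨V, hVU, hVopen, hxV⟩ := mem_nhds_iff.mp hU
  filter_upwards [hVopen.mem_nhds hxV] with y hy
  simp only [Set.mem_compl_iff, measureSupport, Set.mem_setOf_eq, not_forall]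
  exact ⟨V, hVopen.mem_nhds hy, by simp [measure_mono_null hVU hU0]⟩

lemma compl_measureSupport_null (μ : Measure ℝ) : μ (measureSupport μ)ᶜ = 0 := by
  set S : Set (Set ℝ) := {U | IsOpen U ∧ μ U = 0} with hS
  have hsub : (measureSupport μ)ᶜ ⊆ ⋃₀ S := by
    intro x hx
    simp only [Set.mem_compl_iff, measureSupport, Set.mem_setOf_eq, not_forall] at hx
    obtain ⟨U, hU, hU0⟩ := hx
    push_neg at hU0
    obtain ⟨V, hVU, hVopen, hxV⟩ := mem_nhds_iff.mp hU
    exact ⟨V, ⟨hVopen, measure_mono_null hVU hU0⟩, hxV⟩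
  obtain ⟨T, hTc, hTS, hT⟩ := TopologicalSpace.isOpen_sUnion_countable S (fun s hs => hs.1)
  have : μ (⋃₀ S) = 0 := by
    rw [← hT]
    exact (measure_sUnion_null_iff hTc).2 fun s hs => (hTS hs).2
  exact measure_mono_null hsub this

lemma inv_sub_lt_inv_sub {x y t : ℝ} (hxy : x < y) (h : t < x ∨ y < t) :
    (y - t)⁻¹ < (x - t)⁻¹ := by
  rcases h with h | h
  · rw [inv_lt_inv₀ (by linarith) (by linarith)]
    linarith
  · have hx : x - t = -(t - x) := by ring
    have hy : y - t = -(t - y) := by ring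
    rw [hx, hy, inv_neg, inv_neg, neg_lt_neg_iff,
      inv_lt_inv₀ (by linarith) (by linarith)]
    linarith

theorem stmt2 (μ : Measure ℝ) [IsProbabilityMeasure μ]
    (hcompact : IsCompact (measureSupport μ))
    (I : Set ℝ) (hI : Convex ℝ I) (hdisj : I ∩ measureSupport μ = ∅) :
    StrictAntiOn (fun x : ℝ => ∫ t, (x - t)⁻¹ ∂μ) I := by
  intro x hx y hy hxy
  set K := measureSupport μ with hK
  have hKclosed : IsClosed K := isClosed_measureSupport μ
  have haK : ∀ᵐ t ∂μ, t ∈ K := by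
    rw [ae_iff]
    exact compl_measureSupport_null μ
  have hKne : K.Nonempty := by
    by_contra h
    rw [Set.not_nonempty_iff_eq_empty] at h
    have h1 : μ Set.univ = 0 := by
      have := compl_measureSupport_null μ
      rw [← hK, h, Set.compl_empty] at this
      exact this
    simp [measure_univ] at h1
  have hnotK : ∀ z ∈ I, z ∉ K := by
    intro z hz hzK
    have : z ∈ I ∩ K := ⟨hz, hzK⟩
    rw [hdisj] at this
    exact this
  -- integrability
  have hint : ∀ z ∈ I, Integrable (fun t => (z - t)⁻¹) μ := by
    intro z hz
    have hd : 0 < Metric.infDist z K :=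
      (IsClosed.notMem_iff_infDist_pos hKclosed hKne).mp (hnotK z hz)
    refine Integrable.mono' (integrable_const (Metric.infDist z K)⁻¹)
      ((measurable_const.sub measurable_id).inv.aestronglyMeasurable) ?_
    filter_upwards [haK] with t ht
    rw [norm_inv, Real.norm_eq_abs]
    apply inv_anti₀ hd
    calc Metric.infDist z K ≤ dist z t := Metric.infDist_le_dist_of_mem ht
      _ = |z - t| := by rw [Real.dist_eq]
  -- a.e. pointwise strict inequality
  have hIcc : Set.Icc x y ⊆ I := hI.ordConnected.out hx hy
  have hside : ∀ t ∈ K, t < x ∨ y < t := by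
    intro t ht
    by_contra h
    push_neg at h
    exact hnotK t (hIcc ⟨h.1, h.2⟩) ht
  have hpos : ∀ t ∈ K, 0 < (x - t)⁻¹ - (y - t)⁻¹ := by
    intro t ht
    have := inv_sub_lt_inv_sub hxy (hside t ht)
    linarith
  -- strict inequality of integrals
  have hdiff : 0 < ∫ t, ((x - t)⁻¹ - (y - t)⁻¹) ∂μ := by
    rw [integral_pos_iff_support_of_nonneg_ae]
    · have hKsub : K ⊆ Function.support fun t => (x - t)⁻¹ - (y - t)⁻¹ := by
        intro t ht
        exact ne_of_gt (hpos t ht)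
      have hμK : 0 < μ K := by
        by_contra h
        push_neg at h
        have h0 : μ K = 0 := le_antisymm h bot_le
        have : μ Set.univ ≤ μ K + μ Kᶜ := by
          rw [← Set.union_compl_self K]
          exact measure_union_le _ _
        rw [h0, compl_measureSupport_null μ, measure_univ] at this
        simp at this
      exact lt_of_lt_of_le hμK (measure_mono hKsub)
    · filter_upwards [haK] with t ht
      exact le_of_lt (hpos t ht)
    · exact (hint x hx).sub (hint y hy)
  have heq : ∫ t, ((x - t)⁻¹ - (y - t)⁻¹) ∂μ
      = (∫ t, (x - t)⁻¹ ∂μ) - ∫ t, (y - t)⁻¹ ∂μ :=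
    integral_sub (hint x hx) (hint y hy)
  simp only
  linarith [heq ▸ hdiff]
end

section
/- Let η be a compactly supported Borel probability measure on ℝ² with marginals μ and ν, and let z, w ∈ ℂ⁺ and ζ ∈ ℂ satisfy 4·(Im z)·(Im w) > |ζ|². Let N be the 2×2 complex matrix with rows (G_μ(z), −ζ·G_η(z,w)) and (0, G_ν(w)). Then the Hermitian matrix (N − N*)/(2i) is negative definite. -/
open MeasureTheory Matrix Complex
open scoped ComplexOrder

/-- The (one-variable) Cauchy transform of a measure on `ℝ`,
`G_μ(z) = ∫ 1/(z - t) dμ(t)`. -/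
noncomputable def cauchyTransform (μ : Measure ℝ) (z : ℂ) : ℂ :=
  ∫ t, (z - (t : ℂ))⁻¹ ∂μ

/-- The two-variable Cauchy transform of a measure on `ℝ²`,
`G_η(z, w) = ∫ 1/((z - t)(w - s)) dη(t, s)`. -/
noncomputable def cauchyTransform2 (η : Measure (ℝ × ℝ)) (z w : ℂ) : ℂ :=
  ∫ p, ((z - (p.1 : ℂ)) * (w - (p.2 : ℂ)))⁻¹ ∂η

/-- The imaginary part `(M - M^*)/(2i)` of a square complex matrix. -/
noncomputable def matImPart (M : Matrix (Fin 2) (Fin 2) ℂ) : Matrix (Fin 2) (Fin 2) ℂ :=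
  (2 * Complex.I)⁻¹ • (M - Mᴴ)

/-- A Hermitian matrix is negative definite if `⟨Av, v⟩ < 0` for every nonzero vector `v`. -/
def matNegDef (A : Matrix (Fin 2) (Fin 2) ℂ) : Prop :=
  A.IsHermitian ∧ ∀ x : Fin 2 → ℂ, x ≠ 0 → (dotProduct (star x) (A *ᵥ x)).re < 0

lemma matImPart_isHermitian (M : Matrix (Fin 2) (Fin 2) ℂ) : (matImPart M).IsHermitian := by
  unfold Matrix.IsHermitian matImPart
  rw [conjTranspose_smul, conjTranspose_sub, conjTranspose_conjTranspose]
  have : star ((2 * Complex.I)⁻¹) = -(2 * Complex.I)⁻¹ := by simp [← map_inv₀]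
  rw [this, neg_smul, smul_sub, smul_sub, neg_sub]

lemma dot_matImPart (M : Matrix (Fin 2) (Fin 2) ℂ) (x : Fin 2 → ℂ) :
    dotProduct (star x) (matImPart M *ᵥ x)
      = ((dotProduct (star x) (M *ᵥ x)).im : ℂ) := by
  have hS : star (dotProduct (star x) (M *ᵥ x))
      = dotProduct (star x) (Mᴴ *ᵥ x) := by
    simp [dotProduct, Matrix.mulVec, Fin.sum_univ_two, Matrix.conjTranspose_apply,
      star_add, star_mul']
    ring
  rw [Complex.im_eq_sub_conj]
  unfold matImPart
  rw [smul_mulVec, dotProduct_smul, sub_mulVec, dotProduct_sub, ← hS]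
  rw [smul_eq_mul, div_eq_mul_inv, mul_comm]
  rfl

lemma quad_pos (zi wi c p q : ℝ) (hz : 0 < zi) (hw : 0 < wi)
    (hζ : c ^ 2 < 4 * zi * wi) (h : 0 < p ∨ 0 < q) :
    0 < zi * p ^ 2 + wi * q ^ 2 - c * p * q := by
  rcases h with h | h
  · nlinarith [sq_nonneg (2 * wi * q - c * p), sq_nonneg p, mul_pos h h]
  · nlinarith [sq_nonneg (2 * zi * p - c * q), sq_nonneg q, mul_pos h h]

lemma pointwise_neg (z w ζ x0 x1 : ℂ) (hz : 0 < z.im) (hw : 0 < w.im)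
    (hζ : ‖ζ‖ ^ 2 < 4 * z.im * w.im) (hx : x0 ≠ 0 ∨ x1 ≠ 0) (t s : ℝ) :
    ((starRingEnd ℂ) x0 * x0 * (z - (t : ℂ))⁻¹
      + -ζ * (starRingEnd ℂ) x0 * x1 * ((z - (t : ℂ)) * (w - (s : ℂ)))⁻¹
      + (starRingEnd ℂ) x1 * x1 * (w - (s : ℂ))⁻¹).im < 0 := by
  set a := z - (t : ℂ) with ha
  set b := w - (s : ℂ) with hb
  have haim : a.im = z.im := by simp [ha]
  have hbim : b.im = w.im := by simp [hb]
  have ha0 : a ≠ 0 := fun h => by rw [h] at haim; simp at haim; linarith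
  have hb0 : b ≠ 0 := fun h => by rw [h] at hbim; simp at hbim; linarith
  have haabs : 0 < ‖a‖ := norm_pos_iff.mpr ha0
  have hbabs : 0 < ‖b‖ := norm_pos_iff.mpr hb0
  set P := ‖x0‖ / ‖a‖ with hP
  set Q := ‖x1‖ / ‖b‖ with hQ
  have h1 : ((starRingEnd ℂ) x0 * x0 * a⁻¹).im = -(z.im * P ^ 2) := by
    rw [mul_comm ((starRingEnd ℂ) x0) x0, Complex.mul_conj]
    rw [show ((normSq x0 : ℂ) * a⁻¹).im = normSq x0 * a⁻¹.im by simp [Complex.mul_im]]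
    rw [Complex.inv_im, haim, hP, ← Complex.sq_norm x0, ← Complex.sq_norm a]
    field_simp
  have h3 : ((starRingEnd ℂ) x1 * x1 * b⁻¹).im = -(w.im * Q ^ 2) := by
    rw [mul_comm ((starRingEnd ℂ) x1) x1, Complex.mul_conj]
    rw [show ((normSq x1 : ℂ) * b⁻¹).im = normSq x1 * b⁻¹.im by simp [Complex.mul_im]]
    rw [Complex.inv_im, hbim, hQ, ← Complex.sq_norm x1, ← Complex.sq_norm b]
    field_simp
  have h2 : (-ζ * (starRingEnd ℂ) x0 * x1 * (a * b)⁻¹).im ≤ ‖ζ‖ * P * Q := by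
    calc (-ζ * (starRingEnd ℂ) x0 * x1 * (a * b)⁻¹).im
        ≤ ‖-ζ * (starRingEnd ℂ) x0 * x1 * (a * b)⁻¹‖ := Complex.im_le_norm _
      _ = ‖ζ‖ * P * Q := by
          rw [norm_mul, norm_mul, norm_mul, norm_inv, norm_mul, norm_neg,
            Complex.norm_conj, hP, hQ]
          field_simp
  have hPQ : 0 < P ∨ 0 < Q := by
    rcases hx with h | h
    · exact Or.inl (div_pos (norm_pos_iff.mpr h) haabs)
    · exact Or.inr (div_pos (norm_pos_iff.mpr h) hbabs)
  have key := quad_pos z.im w.im (‖ζ‖) P Q hz hw hζ hPQ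
  rw [Complex.add_im, Complex.add_im, h1, h3]
  linarith

theorem stmt6 (η : Measure (ℝ × ℝ)) [IsProbabilityMeasure η]
    (hcompact : IsCompact (measureSupport η)) (z w ζ : ℂ)
    (hz : 0 < z.im) (hw : 0 < w.im) (hζ : ‖ζ‖ ^ 2 < 4 * z.im * w.im) :
    matNegDef (matImPart
      !![cauchyTransform (η.map Prod.fst) z, -ζ * cauchyTransform2 η z w;
         0, cauchyTransform (η.map Prod.snd) w]) := by
  constructor
  · exact matImPart_isHermitian _
  intro x hx
  -- continuity facts
  have hca : Continuous (fun p : ℝ × ℝ => (z - (p.1 : ℂ))⁻¹) := by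
    apply Continuous.inv₀ (continuous_const.sub (Complex.continuous_ofReal.comp continuous_fst))
    intro p h
    have := congrArg Complex.im h
    simp at this; linarith
  have hcb : Continuous (fun p : ℝ × ℝ => (w - (p.2 : ℂ))⁻¹) := by
    apply Continuous.inv₀ (continuous_const.sub (Complex.continuous_ofReal.comp continuous_snd))
    intro p h
    have := congrArg Complex.im h
    simp at this; linarith
  have hcab : Continuous (fun p : ℝ × ℝ => ((z - (p.1 : ℂ)) * (w - (p.2 : ℂ)))⁻¹) := by
    apply Continuous.inv₀
    · exact (continuous_const.sub (Complex.continuous_ofReal.comp continuous_fst)).mul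
        (continuous_const.sub (Complex.continuous_ofReal.comp continuous_snd))
    · intro p h
      rcases mul_eq_zero.mp h with h | h
      · have := congrArg Complex.im h; simp at this; linarith
      · have := congrArg Complex.im h; simp at this; linarith
  -- bounds
  have hbd_a : ∀ u : ℂ, ∀ r : ℝ, 0 < u.im → ‖u - (r : ℂ)‖ ≥ u.im := by
    intro u r hu
    have h := Complex.abs_im_le_norm (u - (r : ℂ))
    simpa [_root_.abs_of_pos hu] using h
  -- integrability
  have hf1 : Integrable (fun p : ℝ × ℝ => (z - (p.1 : ℂ))⁻¹) η := by
    refine (integrable_const (z.im)⁻¹).mono' hca.aestronglyMeasurable ?_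
    filter_upwards with p
    rw [norm_inv]
    exact inv_anti₀ hz (hbd_a z p.1 hz)
  have hf2 : Integrable (fun p : ℝ × ℝ => (w - (p.2 : ℂ))⁻¹) η := by
    refine (integrable_const (w.im)⁻¹).mono' hcb.aestronglyMeasurable ?_
    filter_upwards with p
    rw [norm_inv]
    exact inv_anti₀ hw (hbd_a w p.2 hw)
  have hf12 : Integrable (fun p : ℝ × ℝ => ((z - (p.1 : ℂ)) * (w - (p.2 : ℂ)))⁻¹) η := by
    refine (integrable_const ((z.im * w.im))⁻¹).mono' hcab.aestronglyMeasurable ?_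
    filter_upwards with p
    rw [norm_inv, norm_mul]
    apply inv_anti₀ (mul_pos hz hw)
    exact mul_le_mul (hbd_a z p.1 hz) (hbd_a w p.2 hw) (le_of_lt hw) (norm_nonneg _)
  -- rewrite the Cauchy transforms as integrals over η
  have hG1 : cauchyTransform (η.map Prod.fst) z = ∫ p, (z - ((p : ℝ × ℝ).1 : ℂ))⁻¹ ∂η := by
    unfold cauchyTransform
    rw [integral_map measurable_fst.aemeasurable]
    exact (Continuous.aestronglyMeasurable (by
      apply Continuous.inv₀ (continuous_const.sub Complex.continuous_ofReal)
      intro r h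
      have := congrArg Complex.im h
      simp at this; linarith))
  have hG3 : cauchyTransform (η.map Prod.snd) w = ∫ p, (w - ((p : ℝ × ℝ).2 : ℂ))⁻¹ ∂η := by
    unfold cauchyTransform
    rw [integral_map measurable_snd.aemeasurable]
    exact (Continuous.aestronglyMeasurable (by
      apply Continuous.inv₀ (continuous_const.sub Complex.continuous_ofReal)
      intro r h
      have := congrArg Complex.im h
      simp at this; linarith))
  -- the combined integrand
  set c0 := (starRingEnd ℂ) (x 0) * (x 0) with hc0
  set c1 := (starRingEnd ℂ) (x 1) * (x 1) with hc1
  set cm := -ζ * (starRingEnd ℂ) (x 0) * (x 1) with hcm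
  set F : ℝ × ℝ → ℂ := fun p =>
    c0 * (z - (p.1 : ℂ))⁻¹ + cm * ((z - (p.1 : ℂ)) * (w - (p.2 : ℂ)))⁻¹
      + c1 * (w - (p.2 : ℂ))⁻¹ with hF
  have hFint : Integrable F η := ((hf1.const_mul c0).add (hf12.const_mul cm)).add
    (hf2.const_mul c1)
  -- the quadratic form equals ∫ F
  have hdot : dotProduct (star x)
      ((!![cauchyTransform (η.map Prod.fst) z, -ζ * cauchyTransform2 η z w;
         0, cauchyTransform (η.map Prod.snd) w]) *ᵥ x) = ∫ p, F p ∂η := by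
    have : ∫ p, F p ∂η = c0 * (∫ p, (z - ((p:ℝ×ℝ).1 : ℂ))⁻¹ ∂η)
        + cm * (∫ p, ((z - ((p:ℝ×ℝ).1 : ℂ)) * (w - ((p:ℝ×ℝ).2 : ℂ)))⁻¹ ∂η)
        + c1 * (∫ p, (w - ((p:ℝ×ℝ).2 : ℂ))⁻¹ ∂η) := by
      have i1 : Integrable (fun p : ℝ × ℝ => c0 * (z - (p.1 : ℂ))⁻¹) η := hf1.const_mul c0
      have i12 : Integrable (fun p : ℝ × ℝ => cm * ((z - (p.1 : ℂ)) * (w - (p.2 : ℂ)))⁻¹) η :=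
        hf12.const_mul cm
      have i2 : Integrable (fun p : ℝ × ℝ => c1 * (w - (p.2 : ℂ))⁻¹) η := hf2.const_mul c1
      have isum : Integrable (fun p : ℝ × ℝ => c0 * (z - (p.1 : ℂ))⁻¹
          + cm * ((z - (p.1 : ℂ)) * (w - (p.2 : ℂ)))⁻¹) η := i1.add i12
      rw [hF, integral_add isum i2, integral_add i1 i12,
        integral_const_mul, integral_const_mul, integral_const_mul]
    rw [this, ← hG1, ← hG3]
    unfold cauchyTransform2
    simp [dotProduct, Matrix.mulVec, Fin.sum_univ_two, hc0, hc1, hcm]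
    ring
  rw [dot_matImPart, hdot, Complex.ofReal_re]
  -- imaginary part of the integral
  have him : (∫ p, F p ∂η).im = ∫ p, (F p).im ∂η := (integral_im hFint).symm
  rw [him]
  -- pointwise negativity
  have hx01 : x 0 ≠ 0 ∨ x 1 ≠ 0 := by
    by_contra h
    push_neg at h
    exact hx (funext fun i => by fin_cases i <;> simp [h.1, h.2])
  have hneg : ∀ p : ℝ × ℝ, (F p).im < 0 := by
    intro p
    have := pointwise_neg z w ζ (x 0) (x 1) hz hw hζ hx01 p.1 p.2
    simpa [hF, hc0, hc1, hcm] using this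
  -- strict negativity of the integral
  have hpos : 0 < ∫ p, -(F p).im ∂η := by
    rw [integral_pos_iff_support_of_nonneg (fun p => neg_nonneg.2 (hneg p).le) hFint.im.neg]
    have : Function.support (fun p : ℝ × ℝ => -(F p).im) = Set.univ :=
      Set.eq_univ_of_forall fun p => (neg_pos.2 (hneg p)).ne'
    rw [this]
    simp
  rw [integral_neg] at hpos
  linarith
end

section
/- Let η be a Borel probability measure on ℝ² with marginals μ and ν. Then for all z, w ∈ ℂ⁺: (Im G_μ(z)) · (Im G_ν(w)) ≥ (Im z) · (Im w) · |G_η(z,w)|². (Here Im G_μ(z) and Im G_ν(w) are both nonpositive, so the left-hand side is nonnegative.) -/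
open MeasureTheory Complex

lemma im_le_abs_sub (z : ℂ) {t : ℝ} (hz : 0 < z.im) : z.im ≤ ‖z - t‖ := by
  have h : (z - (t:ℂ)).im = z.im := by simp
  calc z.im = |(z - (t:ℂ)).im| := by rw [h, abs_of_pos hz]
  _ ≤ ‖z - t‖ := Complex.abs_im_le_norm _

lemma abs_sub_ne (z : ℂ) {t : ℝ} (hz : 0 < z.im) : ‖z - t‖ ≠ 0 := by
  have := im_le_abs_sub z (t := t) hz; intro h; rw [h] at this; linarith

lemma sub_ne_zero' (z : ℂ) {t : ℝ} (hz : 0 < z.im) : z - (t:ℂ) ≠ 0 := by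
  intro h
  have := abs_sub_ne z (t := t) hz
  simp [h] at this

lemma inv_im_eq (z : ℂ) {t : ℝ} (hz : 0 < z.im) :
    ((z - (t:ℂ))⁻¹).im = -z.im * ((‖z - t‖)⁻¹) ^ 2 := by
  rw [Complex.inv_im, ← Complex.sq_norm]
  have h : (z - (t:ℂ)).im = z.im := by simp
  rw [h]
  have : ‖z - t‖ ≠ 0 := abs_sub_ne z hz
  field_simp

lemma inv_norm_le (z : ℂ) {t : ℝ} (hz : 0 < z.im) :
    (‖z - t‖)⁻¹ ≤ z.im⁻¹ :=
  inv_anti₀ hz (im_le_abs_sub z hz)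

lemma cont_inv (z : ℂ) (hz : 0 < z.im) : Continuous (fun t : ℝ => (z - (t:ℂ))⁻¹) :=
  Continuous.inv₀ (continuous_const.sub Complex.continuous_ofReal)
    (fun _ => sub_ne_zero' z hz)

lemma im_cauchy_map (η : Measure (ℝ × ℝ)) [IsProbabilityMeasure η]
    (φ : ℝ × ℝ → ℝ) (hφ : Measurable φ) (z : ℂ) (hz : 0 < z.im) :
    (cauchyTransform (η.map φ) z).im
      = -z.im * ∫ p, ((‖z - φ p‖)⁻¹) ^ 2 ∂η := by
  have hcont := cont_inv z hz
  have hint : Integrable (fun p : ℝ × ℝ => (z - (φ p : ℂ))⁻¹) η := by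
    refine (integrable_const (z.im⁻¹)).mono'
      (hcont.measurable.comp hφ).aestronglyMeasurable ?_
    filter_upwards with p
    rw [norm_inv]
    exact inv_norm_le z hz
  rw [cauchyTransform, integral_map hφ.aemeasurable hcont.aestronglyMeasurable]
  have hcomm := Complex.imCLM.integral_comp_comm hint
  simp only [Complex.imCLM_apply] at hcomm
  rw [← hcomm, ← integral_const_mul]
  refine integral_congr_ae (Filter.Eventually.of_forall fun p => ?_)
  exact inv_im_eq z hz

theorem stmt7 (η : Measure (ℝ × ℝ)) [IsProbabilityMeasure η]
    (z w : ℂ) (hz : 0 < z.im) (hw : 0 < w.im) :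
    z.im * w.im * ‖cauchyTransform2 η z w‖ ^ 2 ≤
      (cauchyTransform (η.map Prod.fst) z).im * (cauchyTransform (η.map Prod.snd) w).im := by
  set f : ℝ × ℝ → ℝ := fun p => (‖z - p.1‖)⁻¹ with hf_def
  set g : ℝ × ℝ → ℝ := fun p => (‖w - p.2‖)⁻¹ with hg_def
  have hfc : Continuous f :=
    (continuous_norm.comp (continuous_const.sub
        (Complex.continuous_ofReal.comp continuous_fst))).inv₀
      (fun p => abs_sub_ne z hz)
  have hgc : Continuous g :=
    (continuous_norm.comp (continuous_const.sub
        (Complex.continuous_ofReal.comp continuous_snd))).inv₀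
      (fun p => abs_sub_ne w hw)
  have hf_nonneg : ∀ p, 0 ≤ f p := fun p => by positivity
  have hg_nonneg : ∀ p, 0 ≤ g p := fun p => by positivity
  have hfm : MemLp f 2 η := by
    refine MemLp.mono_exponent (q := ⊤) ?_ le_top
    refine memLp_top_of_bound hfc.aestronglyMeasurable z.im⁻¹ ?_
    filter_upwards with p
    rw [Real.norm_of_nonneg (hf_nonneg p)]
    exact inv_norm_le z hz
  have hgm : MemLp g 2 η := by
    refine MemLp.mono_exponent (q := ⊤) ?_ le_top
    refine memLp_top_of_bound hgc.aestronglyMeasurable w.im⁻¹ ?_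
    filter_upwards with p
    rw [Real.norm_of_nonneg (hg_nonneg p)]
    exact inv_norm_le w hw
  set A := ∫ p, f p ^ 2 ∂η with hA_def
  set B := ∫ p, g p ^ 2 ∂η with hB_def
  have hA_nonneg : 0 ≤ A := integral_nonneg fun p => by positivity
  have hB_nonneg : 0 ≤ B := integral_nonneg fun p => by positivity
  have hpow : ∀ x : ℝ, x ^ (2:ℝ) = x ^ 2 := fun x => by
    rw [show (2:ℝ) = ((2:ℕ):ℝ) by norm_num, Real.rpow_natCast]
  have hCS : ∫ p, f p * g p ∂η ≤ Real.sqrt A * Real.sqrt B := by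
    have h22 : Real.HolderConjugate 2 2 := Real.HolderConjugate.two_two
    have h := integral_mul_le_Lp_mul_Lq_of_nonneg h22
      (Filter.Eventually.of_forall hf_nonneg) (Filter.Eventually.of_forall hg_nonneg)
      (by simpa using hfm) (by simpa using hgm)
    simp_rw [hpow] at h
    rw [Real.sqrt_eq_rpow, Real.sqrt_eq_rpow]
    exact h
  have hGle : ‖cauchyTransform2 η z w‖ ≤ Real.sqrt A * Real.sqrt B := by
    calc ‖cauchyTransform2 η z w‖
        ≤ ∫ p, ‖((z - (p.1:ℂ)) * (w - (p.2:ℂ)))⁻¹‖ ∂η := by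
          exact norm_integral_le_integral_norm _
      _ = ∫ p, f p * g p ∂η := by
          refine integral_congr_ae (Filter.Eventually.of_forall fun p => ?_)
          simp only [norm_inv, norm_mul, map_mul, mul_inv, map_inv₀, hf_def, hg_def]
      _ ≤ Real.sqrt A * Real.sqrt B := hCS
  have hG2 : ‖cauchyTransform2 η z w‖ ^ 2 ≤ A * B := by
    have h0 : (0:ℝ) ≤ ‖cauchyTransform2 η z w‖ := norm_nonneg _
    calc ‖cauchyTransform2 η z w‖ ^ 2
        ≤ (Real.sqrt A * Real.sqrt B) ^ 2 := pow_le_pow_left₀ h0 hGle 2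
      _ = A * B := by rw [mul_pow, Real.sq_sqrt hA_nonneg, Real.sq_sqrt hB_nonneg]
  have h1 := im_cauchy_map η Prod.fst measurable_fst z hz
  have h2 := im_cauchy_map η Prod.snd measurable_snd w hw
  rw [h1, h2]
  have hAeq : (∫ p, ((‖z - p.1‖)⁻¹) ^ 2 ∂η) = A := rfl
  have hBeq : (∫ p, ((‖w - p.2‖)⁻¹) ^ 2 ∂η) = B := rfl
  rw [hAeq, hBeq]
  have : -z.im * A * (-w.im * B) = z.im * w.im * (A * B) := by ring
  rw [this]
  exact mul_le_mul_of_nonneg_left hG2 (by positivity)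
end

section
/- Let η and θ be Borel probability measures on ℝ², and let ω_a, ω_b : ℂ⁺ → ℂ⁺ be functions such that G_θ(ω_a(z), ω_b(w)) ≠ 0 for all z, w ∈ ℂ⁺, and such that for all z, w ∈ ℂ⁺ and all ζ ∈ ℂ with 4·(Im z)·(Im w) > |ζ|², the 2×2 matrix with rows (ω_a(z), ζ·G_η(z,w)/G_θ(ω_a(z), ω_b(w))) and (0, ω_b(w)) has positive definite imaginary part. Then for all z, w ∈ ℂ⁺: (Im ω_a(z)) · (Im ω_b(w)) · |G_θ(ω_a(z), ω_b(w))|² ≥ (Im z) · (Im w) · |G_η(z,w)|². -/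
open MeasureTheory Matrix Complex
open scoped ComplexOrder

lemma aux_det (a b c : ℂ) (ha : 0 < a.im)
    (h : (matImPart !![a, c; 0, b]).PosDef) : normSq c < 4 * a.im * b.im := by
  set x : Fin 2 → ℂ := ![-(c / (2 * Complex.I)), (a.im : ℂ)] with hx
  have hx0 : x ≠ 0 := by
    intro h0
    have : (a.im:ℂ) ≠ 0 := by exact_mod_cast ha.ne'
    exact this (by simpa [hx] using congrFun h0 1)
  have hQ := h.dotProduct_mulVec_pos hx0
  have hexp : star x ⬝ᵥ (matImPart !![a, c; 0, b]) *ᵥ x =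
      (a.im : ℂ) * ((a.im : ℂ) * (b.im : ℂ) - (normSq c : ℂ) / 4) := by
    simp [matImPart, Matrix.mulVec, dotProduct, Fin.sum_univ_two, hx,
      Matrix.conjTranspose_apply, Complex.ext_iff]
    constructor <;> ring_nf <;> simp [Complex.normSq_apply] <;> ring
  rw [hexp] at hQ
  rw [Complex.lt_def] at hQ
  obtain ⟨hre, -⟩ := hQ
  simp at hre
  nlinarith [hre, ha]

theorem stmt8 (η θ : Measure (ℝ × ℝ)) [IsProbabilityMeasure η] [IsProbabilityMeasure θ]
    (ωa ωb : ℂ → ℂ)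
    (hωa : ∀ z : ℂ, 0 < z.im → 0 < (ωa z).im)
    (hωb : ∀ w : ℂ, 0 < w.im → 0 < (ωb w).im)
    (hne : ∀ z w : ℂ, 0 < z.im → 0 < w.im → cauchyTransform2 θ (ωa z) (ωb w) ≠ 0)
    (hPD : ∀ z w : ℂ, 0 < z.im → 0 < w.im → ∀ ζ : ℂ, ‖ζ‖ ^ 2 < 4 * z.im * w.im →
      (matImPart !![ωa z, ζ * cauchyTransform2 η z w / cauchyTransform2 θ (ωa z) (ωb w);
                    0, ωb w]).PosDef)
    (z w : ℂ) (hz : 0 < z.im) (hw : 0 < w.im) :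
    z.im * w.im * ‖cauchyTransform2 η z w‖ ^ 2 ≤
      (ωa z).im * (ωb w).im * ‖cauchyTransform2 θ (ωa z) (ωb w)‖ ^ 2 := by
  set Gη := cauchyTransform2 η z w with hGη
  set Gθ := cauchyTransform2 θ (ωa z) (ωb w) with hGθ
  have hθ0 : Gθ ≠ 0 := hne z w hz hw
  have hθpos : 0 < normSq Gθ := normSq_pos.mpr hθ0
  have ha := hωa z hz
  have hb := hωb w hw
  rw [Complex.sq_norm, Complex.sq_norm]
  have key : ∀ t : ℝ, 0 ≤ t → t < 4 * z.im * w.im →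
      t * normSq Gη < 4 * (ωa z).im * (ωb w).im * normSq Gθ := by
    intro t ht htl
    have habs : ‖((Real.sqrt t : ℝ) : ℂ)‖ ^ 2 = t := by
      rw [Complex.norm_real, Real.norm_eq_abs, _root_.abs_of_nonneg (Real.sqrt_nonneg t), Real.sq_sqrt ht]
    have hPDt := hPD z w hz hw ((Real.sqrt t : ℝ) : ℂ) (by rw [habs]; exact htl)
    have hdet := aux_det _ _ _ ha hPDt
    have hns : normSq (((Real.sqrt t : ℝ) : ℂ) * Gη / Gθ) = t * normSq Gη / normSq Gθ := by
      rw [map_div₀, _root_.map_mul, normSq_ofReal, Real.mul_self_sqrt ht]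
    rw [hns, div_lt_iff₀ hθpos] at hdet
    linarith
  rcases eq_or_lt_of_le (normSq_nonneg Gη) with h0 | hpos
  · rw [← h0, mul_zero]
    positivity
  · by_contra hcon
    push_neg at hcon
    set t : ℝ := (4 * (ωa z).im * (ωb w).im * normSq Gθ / normSq Gη + 4 * z.im * w.im) / 2 with htd
    have h1 : 4 * (ωa z).im * (ωb w).im * normSq Gθ / normSq Gη < 4 * z.im * w.im := by
      rw [div_lt_iff₀ hpos]; nlinarith
    have ht0 : 0 ≤ t := by
      have : 0 ≤ 4 * (ωa z).im * (ωb w).im * normSq Gθ / normSq Gη := by positivity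
      simp only [htd]; linarith
    have htl : t < 4 * z.im * w.im := by simp only [htd]; linarith
    have hk := key t ht0 htl
    have h2 : 4 * (ωa z).im * (ωb w).im * normSq Gθ / normSq Gη < t := by
      simp only [htd]; linarith
    rw [div_lt_iff₀ hpos] at h2
    linarith
end

section
/- Let η be a finite Borel measure on ℝ², let (ξ, ζ) ∈ ℝ², and let {z_n}, {w_n} be sequences in ℂ⁺ with z_n → ξ and w_n → ζ, converging nontangentially: there is a constant C > 0 such that |Re z_n − ξ| ≤ C·Im z_n and |Re w_n − ζ| ≤ C·Im w_n for all n. Then lim_{n→∞} (z_n − ξ)(w_n − ζ)·G_η(z_n, w_n) = η({(ξ, ζ)}). -/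
open MeasureTheory Complex Filter Topology

lemma norm_sub_le_nt {z : ℂ} (hz : 0 < z.im) {ξ C : ℝ} (hNT : |z.re - ξ| ≤ C * z.im) (t : ℝ) :
    ‖z - (ξ:ℂ)‖ ≤ Real.sqrt (C^2+1) * ‖z - (t:ℂ)‖ := by
  have h1 : ‖z - (ξ:ℂ)‖ ≤ Real.sqrt (C^2+1) * z.im := by
    have hre : (z - (ξ:ℂ)).re = z.re - ξ := by simp
    have him : (z - (ξ:ℂ)).im = z.im := by simp
    rw [Complex.norm_def, Complex.normSq_apply, hre, him,
      show Real.sqrt (C^2+1) * z.im = Real.sqrt ((C^2+1) * z.im^2) by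
        rw [Real.sqrt_mul (by positivity), Real.sqrt_sq hz.le]]
    apply Real.sqrt_le_sqrt
    nlinarith [mul_self_le_mul_self (abs_nonneg (z.re - ξ)) hNT,
      abs_mul_abs_self (z.re - ξ), sq_nonneg z.im]
  have h2 : z.im ≤ ‖z - (t:ℂ)‖ := by
    have : (z - (t:ℂ)).im = z.im := by simp
    calc z.im ≤ |(z - (t:ℂ)).im| := by rw [this]; exact le_abs_self _
      _ ≤ ‖z - (t:ℂ)‖ := Complex.abs_im_le_norm _
  exact h1.trans (mul_le_mul_of_nonneg_left h2 (Real.sqrt_nonneg _))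

lemma ratio_le {a b : ℂ} {M : ℝ} (hb : b ≠ 0) (h : ‖a‖ ≤ M * ‖b‖) : ‖a * b⁻¹‖ ≤ M := by
  have hb' : (0:ℝ) < ‖b‖ := norm_pos_iff.mpr hb
  rw [norm_mul, norm_inv]
  calc ‖a‖ * ‖b‖⁻¹ ≤ (M * ‖b‖) * ‖b‖⁻¹ := by gcongr
    _ = M := by rw [mul_assoc, mul_inv_cancel₀ hb'.ne', mul_one]

lemma tendsto_zero_mul_bdd {u v : ℕ → ℂ} {M : ℝ} (hu : Tendsto u atTop (𝓝 0))
    (hv : ∀ n, ‖v n‖ ≤ M) : Tendsto (fun n => u n * v n) atTop (𝓝 0) := by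
  have h1 : ∀ n, ‖u n * v n‖ ≤ ‖u n‖ * M := by
    intro n
    rw [norm_mul]
    exact mul_le_mul_of_nonneg_left (hv n) (norm_nonneg _)
  have h2 : Tendsto (fun n => ‖u n‖) atTop (𝓝 0) := by simpa using hu.norm
  exact squeeze_zero_norm h1 (by simpa using h2.mul_const M)

theorem stmt9 (η : Measure (ℝ × ℝ)) [IsFiniteMeasure η] (ξ ζ : ℝ)
    (z w : ℕ → ℂ)
    (hz : ∀ n, 0 < (z n).im) (hw : ∀ n, 0 < (w n).im)
    (hzlim : Tendsto z atTop (𝓝 (ξ : ℂ))) (hwlim : Tendsto w atTop (𝓝 (ζ : ℂ)))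
    (C : ℝ) (hC : 0 < C)
    (hzNT : ∀ n, |(z n).re - ξ| ≤ C * (z n).im)
    (hwNT : ∀ n, |(w n).re - ζ| ≤ C * (w n).im) :
    Tendsto (fun n => (z n - (ξ : ℂ)) * (w n - (ζ : ℂ)) * cauchyTransform2 η (z n) (w n))
      atTop (𝓝 (((η {(ξ, ζ)}).toReal : ℂ))) := by
  set s : ℝ := Real.sqrt (C^2+1) with hs
  have hs0 : 0 ≤ s := Real.sqrt_nonneg _
  -- denominators never vanish
  have hzne : ∀ n (t : ℝ), z n - (t:ℂ) ≠ 0 := by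
    intro n t h
    have : (z n - (t:ℂ)).im = 0 := by rw [h]; simp
    simp at this
    exact absurd this (hz n).ne'
  have hwne : ∀ n (t : ℝ), w n - (t:ℂ) ≠ 0 := by
    intro n t h
    have : (w n - (t:ℂ)).im = 0 := by rw [h]; simp
    simp at this
    exact absurd this (hw n).ne'
  set F : ℕ → ℝ × ℝ → ℂ := fun n p =>
    (z n - (ξ:ℂ)) * (w n - (ζ:ℂ)) * ((z n - (p.1:ℂ)) * (w n - (p.2:ℂ)))⁻¹ with hF
  have hFsplit : ∀ n p, F n p =
      ((z n - (ξ:ℂ)) * (z n - (p.1:ℂ))⁻¹) * ((w n - (ζ:ℂ)) * (w n - (p.2:ℂ))⁻¹) := by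
    intro n p
    rw [hF]
    simp only
    rw [mul_inv]
    ring
  -- ratio bounds
  have hratz : ∀ n (t : ℝ), ‖(z n - (ξ:ℂ)) * (z n - (t:ℂ))⁻¹‖ ≤ s :=
    fun n t => ratio_le (hzne n t) (norm_sub_le_nt (hz n) (hzNT n) t)
  have hratw : ∀ n (t : ℝ), ‖(w n - (ζ:ℂ)) * (w n - (t:ℂ))⁻¹‖ ≤ s :=
    fun n t => ratio_le (hwne n t) (norm_sub_le_nt (hw n) (hwNT n) t)
  -- rewrite goal as integral of F n
  have hrw : ∀ n, (z n - (ξ : ℂ)) * (w n - (ζ : ℂ)) * cauchyTransform2 η (z n) (w n)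
      = ∫ p, F n p ∂η := by
    intro n
    rw [cauchyTransform2, ← integral_const_mul]
  simp only [hrw]
  -- target value
  have hval : (((η {(ξ, ζ)}).toReal : ℂ)) =
      ∫ p, Set.indicator {((ξ, ζ) : ℝ × ℝ)} (fun _ => (1:ℂ)) p ∂η := by
    rw [integral_indicator_const _ (measurableSet_singleton _)]
    simp
    rfl
  rw [hval]
  apply tendsto_integral_of_dominated_convergence (fun _ => s^2)
  · intro n
    apply Continuous.aestronglyMeasurable
    apply continuous_const.mul
    apply Continuous.inv₀
    · exact (continuous_const.sub (Complex.continuous_ofReal.comp continuous_fst)).mul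
        (continuous_const.sub (Complex.continuous_ofReal.comp continuous_snd))
    · intro p
      exact mul_ne_zero (hzne n p.1) (hwne n p.2)
  · exact integrable_const _
  · intro n
    filter_upwards with p
    rw [hFsplit n p, norm_mul, sq]
    exact mul_le_mul (hratz n p.1) (hratw n p.2) (norm_nonneg _) hs0
  · filter_upwards with p
    by_cases hp : p = ((ξ, ζ) : ℝ × ℝ)
    · subst hp
      have : ∀ n, F n (ξ, ζ) = 1 := by
        intro n
        rw [hF]
        exact mul_inv_cancel₀ (mul_ne_zero (hzne n ξ) (hwne n ζ))
      simp only [this, Set.indicator_of_mem (Set.mem_singleton _)]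
      exact tendsto_const_nhds
    · rw [Set.indicator_of_notMem (by simpa using hp)]
      have hp' : p.1 ≠ ξ ∨ p.2 ≠ ζ := by
        by_contra h
        push_neg at h
        exact hp (Prod.ext h.1 h.2)
      simp only [hFsplit]
      rcases hp' with h | h
      · apply tendsto_zero_mul_bdd _ (fun n => hratw n p.2)
        have hd : Tendsto (fun n => (z n - (p.1:ℂ))⁻¹) atTop (𝓝 ((ξ:ℂ) - (p.1:ℂ))⁻¹) :=
          (hzlim.sub_const _).inv₀ (by
            simp only [ne_eq, sub_eq_zero]
            exact fun hh => h (Complex.ofReal_inj.mp hh.symm))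
        have hn : Tendsto (fun n => z n - (ξ:ℂ)) atTop (𝓝 0) := by
          simpa using hzlim.sub_const (ξ:ℂ)
        simpa using hn.mul hd
      · have hd : Tendsto (fun n => (w n - (p.2:ℂ))⁻¹) atTop (𝓝 ((ζ:ℂ) - (p.2:ℂ))⁻¹) :=
          (hwlim.sub_const _).inv₀ (by
            simp only [ne_eq, sub_eq_zero]
            exact fun hh => h (Complex.ofReal_inj.mp hh.symm))
        have hn : Tendsto (fun n => w n - (ζ:ℂ)) atTop (𝓝 0) := by
          simpa using hwlim.sub_const (ζ:ℂ)
        have hu0 : Tendsto (fun n => (w n - (ζ:ℂ)) * (w n - (p.2:ℂ))⁻¹) atTop (𝓝 0) := by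
          simpa using hn.mul hd
        have := tendsto_zero_mul_bdd hu0 (fun n => hratz n p.1)
        simpa [mul_comm] using this
end
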